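/- Let γ⁺, γ⁻ > 0, let ρ ≥ 0 and n ≥ 0 with ρ + n > 0, and let x > 0 satisfy x^(γ⁺/γ⁻)·(x − ρ) = n·x. Then, with q̲ := min{1, γ⁻/γ⁺} and q̄ := max{1, γ⁻/γ⁺}, one has max{ρ, q̲·(ρ + n^(γ⁻/γ⁺))} ≤ x ≤ q̄·(ρ + n^(γ⁻/γ⁺)). -/

import Mathlib

/-- Bounds for the dominant density: `max {ρ, q̲(ρ + n^(γ⁻/γ⁺))} ≤ ρ₊ ≤ q̄(ρ + n^(γ⁻/γ⁺))`. -/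
theorem biFluid_dominant_density_bounds
    (gp gm ρ n x : ℝ) (hgp : 0 < gp) (hgm : 0 < gm)
    (hρ : 0 ≤ ρ) (hn : 0 ≤ n) (hsum : 0 < ρ + n)
    (hx : 0 < x) (heq : x ^ (gp / gm) * (x - ρ) = n * x) :
    max ρ (min 1 (gm / gp) * (ρ + n ^ (gm / gp))) ≤ x ∧
      x ≤ max 1 (gm / gp) * (ρ + n ^ (gm / gp)) := by
  set α : ℝ := gp / gm with hαdef
  set β : ℝ := gm / gp with hβdef
  have hα : 0 < α := div_pos hgp hgm
  have hβ : 0 < β := div_pos hgm hgp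
  have hαβ : α * β = 1 := by
    rw [hαdef, hβdef, div_mul_div_comm, mul_comm gp gm, div_self (by positivity)]
  have hxne : x ≠ 0 := ne_of_gt hx
  have hxα : 0 < x ^ (α - 1) := Real.rpow_pos_of_pos hx _
  have key : x ^ (α - 1) * (x - ρ) = n := by
    have h1 : x ^ (α - 1) = x ^ α / x := by
      rw [Real.rpow_sub hx, Real.rpow_one]
    rw [h1]
    field_simp
    linarith [heq]
  have hxρ : ρ ≤ x := by nlinarith [hxα, key, hn]
  rcases eq_or_lt_of_le hn with hn0 | hn0
  · -- n = 0
    have hxeq : x = ρ := by nlinarith [hxα, key]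
    have hm0 : n ^ β = 0 := by rw [← hn0, Real.zero_rpow (ne_of_gt hβ)]
    rw [hm0, hxeq]
    constructor
    · apply max_le le_rfl
      have h1 : min 1 β ≤ 1 := min_le_left _ _
      nlinarith [min_le_left 1 β]
    · have h1 : (1 : ℝ) ≤ max 1 β := le_max_left _ _
      nlinarith
  · -- n > 0
    have hxρ' : ρ < x := by nlinarith [hxα, key]
    set m : ℝ := n ^ β with hmdef
    have hm : 0 < m := Real.rpow_pos_of_pos hn0 _
    have hxρpos : 0 < x - ρ := by linarith
    have hmx : m = x ^ (1 - β) * (x - ρ) ^ β := by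
      rw [hmdef, ← key, Real.mul_rpow (le_of_lt hxα) (le_of_lt hxρpos),
        ← Real.rpow_mul hx.le, show (α - 1) * β = 1 - β from by
          rw [sub_mul, hαβ, one_mul]]
    constructor
    · apply max_le hxρ
      rcases le_total β 1 with hβ1 | hβ1
      · -- β ≤ 1 : AM-GM gives m ≤ x - β*ρ
        have hgm2 : (x - ρ) ^ β * x ^ (1 - β) ≤ β * (x - ρ) + (1 - β) * x :=
          Real.geom_mean_le_arith_mean2_weighted hβ.le (by linarith)
            hxρpos.le hx.le (by ring)
        have hmle : m ≤ x - β * ρ := by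
          rw [hmx, mul_comm]
          calc (x - ρ) ^ β * x ^ (1 - β) ≤ β * (x - ρ) + (1 - β) * x := hgm2
            _ = x - β * ρ := by ring
        rw [min_eq_right hβ1]
        nlinarith [hm.le]
      · -- β ≥ 1 : m ≤ x - ρ
        have h1 : x ^ (1 - β) ≤ (x - ρ) ^ (1 - β) :=
          Real.rpow_le_rpow_of_nonpos hxρpos (by linarith) (by linarith)
        have h2 : m ≤ (x - ρ) ^ (1 - β) * (x - ρ) ^ β := by
          rw [hmx]
          exact mul_le_mul_of_nonneg_right h1 (Real.rpow_nonneg hxρpos.le _)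
        rw [← Real.rpow_add hxρpos, show (1 - β) + β = 1 by ring, Real.rpow_one] at h2
        rw [min_eq_left hβ1]
        nlinarith
    · rcases le_total β 1 with hβ1 | hβ1
      · -- β ≤ 1 : x - ρ ≤ m
        have h1 : (x - ρ) ^ (1 - β) ≤ x ^ (1 - β) :=
          Real.rpow_le_rpow hxρpos.le (by linarith) (by linarith)
        have h2 : (x - ρ) ^ (1 - β) * (x - ρ) ^ β ≤ m := by
          rw [hmx]
          exact mul_le_mul_of_nonneg_right h1 (Real.rpow_nonneg hxρpos.le _)
        rw [← Real.rpow_add hxρpos, show (1 - β) + β = 1 by ring, Real.rpow_one] at h2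
        have h3 : (1 : ℝ) ≤ max 1 β := le_max_left _ _
        nlinarith
      · -- β ≥ 1 : x ≤ β*ρ + m
        have hβne : β ≠ 0 := ne_of_gt hβ
        have hid : m ^ (1 / β) * x ^ (1 - 1 / β) = x - ρ := by
          rw [hmx, Real.mul_rpow (Real.rpow_nonneg hx.le _) (Real.rpow_nonneg hxρpos.le _),
            ← Real.rpow_mul hx.le, ← Real.rpow_mul hxρpos.le,
            show β * (1 / β) = 1 from by field_simp, Real.rpow_one,
            mul_right_comm, ← Real.rpow_add hx,
            show (1 - β) * (1 / β) + (1 - 1 / β) = 0 from by field_simp; ring, Real.rpow_zero, one_mul]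
        have hgm2 : m ^ (1 / β) * x ^ (1 - 1 / β) ≤ (1 / β) * m + (1 - 1 / β) * x :=
          Real.geom_mean_le_arith_mean2_weighted (by positivity)
            (by rw [sub_nonneg]; rw [div_le_one hβ]; linarith)
            hm.le hx.le (by ring)
        rw [hid] at hgm2
        -- x - ρ ≤ m/β + x - x/β  ⇒  x ≤ β*ρ + m
        have h4 : x ≤ β * ρ + m := by
          have := mul_le_mul_of_nonneg_left hgm2 hβ.le
          have hb : β * (1 / β) = 1 := by field_simp
          nlinarith [hgm2, hβ]
        rw [max_eq_right hβ1]
        nlinarith [hm.le]
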